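/- There exist two single-follower 2×2 games (shared leader action set) such that the sum of the individual precise Stackelberg values (with leader-favorable tie-breaking) is 8, while in the combined two-follower game the leader's pessimistic value under the fully ambiguous commitment Δ(A_L) is 10. Concretely: follower payoffs F1 = (5,2;0,2), F2 = (2,0;2,5); leader payoffs against F1 = (0,10;0,0) and against F2 = (0,0;10,0) (rows are leader actions, columns follower actions). Under full ambiguity, F1's maximin response is its second action and F2's maximin response is its first action, yielding leader payoff 10 for every leader mixed strategy. -/
import Mathlib


/-- Follower 1's payoffs (rows = leader actions, columns = follower actions). -/
noncomputable def UB1 : Fin 2 → Fin 2 → ℝ := ![![5, 2], ![0, 2]]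

/-- Follower 2's payoffs. -/
noncomputable def UB2 : Fin 2 → Fin 2 → ℝ := ![![2, 0], ![2, 5]]

/-- Leader's payoffs against follower 1. -/
noncomputable def LB1 : Fin 2 → Fin 2 → ℝ := ![![0, 10], ![0, 0]]

/-- Leader's payoffs against follower 2. -/
noncomputable def LB2 : Fin 2 → Fin 2 → ℝ := ![![0, 0], ![10, 0]]

/-- Expected payoff of pure column `b` against leader mixture `p` (prob. of second row). -/
noncomputable def Epay (M : Fin 2 → Fin 2 → ℝ) (p : ℝ) (b : Fin 2) : ℝ :=
  (1 - p) * M 0 b + p * M 1 b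

/-- The sum of the individual precise Stackelberg values (leader-favorable tie-breaking) of
the two single-follower games is `4 + 4 = 8`, while under the fully ambiguous commitment
`Δ(A_L)` follower 1's maximin response is its second action, follower 2's is its first
action, and the leader then receives `10` for every leader mixed strategy; hence the
pessimistic fully ambiguous value is `10 > 8`. -/
theorem stmt13 :
    sSup {v : ℝ | ∃ p ∈ Set.Icc (0:ℝ) 1, ∃ b : Fin 2,
        (∀ b' : Fin 2, Epay UB1 p b' ≤ Epay UB1 p b) ∧ v = Epay LB1 p b} = 4 ∧
    sSup {v : ℝ | ∃ p ∈ Set.Icc (0:ℝ) 1, ∃ c : Fin 2,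
        (∀ c' : Fin 2, Epay UB2 p c' ≤ Epay UB2 p c) ∧ v = Epay LB2 p c} = 4 ∧
    (∀ q ∈ stdSimplex ℝ (Fin 2),
      sInf ((fun p => q 0 * Epay UB1 p 0 + q 1 * Epay UB1 p 1) '' Set.Icc (0:ℝ) 1) ≤
      sInf ((fun p => Epay UB1 p 1) '' Set.Icc (0:ℝ) 1)) ∧
    (∀ q ∈ stdSimplex ℝ (Fin 2),
      sInf ((fun p => q 0 * Epay UB2 p 0 + q 1 * Epay UB2 p 1) '' Set.Icc (0:ℝ) 1) ≤
      sInf ((fun p => Epay UB2 p 0) '' Set.Icc (0:ℝ) 1)) ∧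
    (∀ p ∈ Set.Icc (0:ℝ) 1, Epay LB1 p 1 + Epay LB2 p 0 = 10) ∧
    sInf ((fun p => Epay LB1 p 1 + Epay LB2 p 0) '' Set.Icc (0:ℝ) 1) = 10 := by
  have E1 : ∀ p : ℝ, Epay UB1 p 0 = 5 * (1 - p) ∧ Epay UB1 p 1 = 2 := by
    intro p; constructor <;> simp [Epay, UB1] <;> ring
  have E2 : ∀ p : ℝ, Epay UB2 p 0 = 2 ∧ Epay UB2 p 1 = 5 * p := by
    intro p; constructor <;> simp [Epay, UB2] <;> ring
  have L1 : ∀ p : ℝ, Epay LB1 p 0 = 0 ∧ Epay LB1 p 1 = 10 * (1 - p) := by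
    intro p; constructor <;> simp [Epay, LB1] <;> ring
  have L2 : ∀ p : ℝ, Epay LB2 p 0 = 10 * p ∧ Epay LB2 p 1 = 0 := by
    intro p; constructor <;> simp [Epay, LB2] <;> ring
  have hub1 : ∀ v ∈ {v : ℝ | ∃ p ∈ Set.Icc (0:ℝ) 1, ∃ b : Fin 2,
      (∀ b' : Fin 2, Epay UB1 p b' ≤ Epay UB1 p b) ∧ v = Epay LB1 p b}, v ≤ 4 := by
    rintro v ⟨p, ⟨hp0, hp1⟩, b, hb, rfl⟩
    fin_cases b
    · show Epay LB1 p 0 ≤ 4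
      rw [(L1 p).1]; norm_num
    · have h : Epay UB1 p 0 ≤ Epay UB1 p 1 := hb 0
      rw [(E1 p).1, (E1 p).2] at h
      show Epay LB1 p 1 ≤ 4
      rw [(L1 p).2]; linarith
  have hub2 : ∀ v ∈ {v : ℝ | ∃ p ∈ Set.Icc (0:ℝ) 1, ∃ c : Fin 2,
      (∀ c' : Fin 2, Epay UB2 p c' ≤ Epay UB2 p c) ∧ v = Epay LB2 p c}, v ≤ 4 := by
    rintro v ⟨p, ⟨hp0, hp1⟩, c, hc, rfl⟩
    fin_cases c
    · have h : Epay UB2 p 1 ≤ Epay UB2 p 0 := hc 1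
      rw [(E2 p).1, (E2 p).2] at h
      show Epay LB2 p 0 ≤ 4
      rw [(L2 p).1]; linarith
    · show Epay LB2 p 1 ≤ 4
      rw [(L2 p).2]; norm_num
  refine ⟨?_, ?_, ?_, ?_, ?_, ?_⟩
  · apply le_antisymm
    · exact Real.sSup_le hub1 (by norm_num)
    · apply le_csSup ⟨4, hub1⟩
      refine ⟨3/5, by norm_num, 1, ?_, ?_⟩
      · intro b'; fin_cases b'
        · show Epay UB1 (3/5) 0 ≤ Epay UB1 (3/5) 1
          rw [(E1 (3/5)).1, (E1 (3/5)).2]; norm_num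
        · exact le_refl _
      · rw [(L1 (3/5)).2]; norm_num
  · apply le_antisymm
    · exact Real.sSup_le hub2 (by norm_num)
    · apply le_csSup ⟨4, hub2⟩
      refine ⟨2/5, by norm_num, 0, ?_, ?_⟩
      · intro c'; fin_cases c'
        · exact le_refl _
        · show Epay UB2 (2/5) 1 ≤ Epay UB2 (2/5) 0
          rw [(E2 (2/5)).1, (E2 (2/5)).2]; norm_num
      · rw [(L2 (2/5)).1]; norm_num
  · intro q hq
    obtain ⟨hq0, hqs⟩ := hq
    have h0 : 0 ≤ q 0 := hq0 0
    have h1 : 0 ≤ q 1 := hq0 1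
    have hsum : q 0 + q 1 = 1 := by
      have := hqs
      simpa [Fin.sum_univ_two] using this
    have hrhs : ((fun p => Epay UB1 p 1) '' Set.Icc (0:ℝ) 1) = {2} := by
      ext x
      constructor
      · rintro ⟨p, hp, rfl⟩; simp [(E1 p).2]
      · rintro rfl; exact ⟨0, by norm_num, (E1 0).2⟩
    rw [hrhs, csInf_singleton]
    have hmem : q 0 * Epay UB1 1 0 + q 1 * Epay UB1 1 1 ∈
        ((fun p => q 0 * Epay UB1 p 0 + q 1 * Epay UB1 p 1) '' Set.Icc (0:ℝ) 1) :=
      ⟨1, by norm_num, rfl⟩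
    have hbdd : BddBelow ((fun p => q 0 * Epay UB1 p 0 + q 1 * Epay UB1 p 1) '' Set.Icc (0:ℝ) 1) := by
      refine ⟨0, ?_⟩
      rintro x ⟨p, ⟨hp0, hp1⟩, rfl⟩
      show 0 ≤ q 0 * Epay UB1 p 0 + q 1 * Epay UB1 p 1
      rw [(E1 p).1, (E1 p).2]
      have : 0 ≤ 5 * (1 - p) := by linarith
      positivity
    calc sInf _ ≤ q 0 * Epay UB1 1 0 + q 1 * Epay UB1 1 1 := csInf_le hbdd hmem
      _ ≤ 2 := by rw [(E1 1).1, (E1 1).2]; nlinarith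
  · intro q hq
    obtain ⟨hq0, hqs⟩ := hq
    have h0 : 0 ≤ q 0 := hq0 0
    have h1 : 0 ≤ q 1 := hq0 1
    have hsum : q 0 + q 1 = 1 := by
      simpa [Fin.sum_univ_two] using hqs
    have hrhs : ((fun p => Epay UB2 p 0) '' Set.Icc (0:ℝ) 1) = {2} := by
      ext x
      constructor
      · rintro ⟨p, hp, rfl⟩; simp [(E2 p).1]
      · rintro rfl; exact ⟨0, by norm_num, (E2 0).1⟩
    rw [hrhs, csInf_singleton]
    have hmem : q 0 * Epay UB2 0 0 + q 1 * Epay UB2 0 1 ∈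
        ((fun p => q 0 * Epay UB2 p 0 + q 1 * Epay UB2 p 1) '' Set.Icc (0:ℝ) 1) :=
      ⟨0, by norm_num, rfl⟩
    have hbdd : BddBelow ((fun p => q 0 * Epay UB2 p 0 + q 1 * Epay UB2 p 1) '' Set.Icc (0:ℝ) 1) := by
      refine ⟨0, ?_⟩
      rintro x ⟨p, ⟨hp0, hp1⟩, rfl⟩
      show 0 ≤ q 0 * Epay UB2 p 0 + q 1 * Epay UB2 p 1
      rw [(E2 p).1, (E2 p).2]
      positivity
    calc sInf _ ≤ q 0 * Epay UB2 0 0 + q 1 * Epay UB2 0 1 := csInf_le hbdd hmem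
      _ ≤ 2 := by rw [(E2 0).1, (E2 0).2]; nlinarith
  · intro p hp
    rw [(L1 p).2, (L2 p).1]; ring
  · have : ((fun p => Epay LB1 p 1 + Epay LB2 p 0) '' Set.Icc (0:ℝ) 1) = {10} := by
      ext x
      constructor
      · rintro ⟨p, hp, rfl⟩
        show Epay LB1 p 1 + Epay LB2 p 0 ∈ ({10} : Set ℝ)
        rw [Set.mem_singleton_iff, (L1 p).2, (L2 p).1]; ring
      · rintro rfl
        exact ⟨0, by norm_num, show Epay LB1 0 1 + Epay LB2 0 0 = 10 by
          rw [(L1 0).2, (L2 0).1]; ring⟩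
    rw [this, csInf_singleton]
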